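/- Let n, k, c, L be positive integers with k dividing n. Let Ψ be a finite set of complex numbers with |Ψ| = 2^c, H a complex random variable with P(H = 0) = 0, and define for a = 1, …, n/k the pass counts L_a = L·(n/k − a + 1). With quadrature angles 0 = θ_0 < θ_1 < ⋯ < θ_N = π/2, b_t = (θ_t − θ_{t−1})/π, G(σ, θ) = Σ_{β_i, β_j ∈ Ψ} E[exp(−|H·(β_i − β_j)|² / (4σ² sin²θ))], and F(L_a, σ) = Σ_{t=1}^N b_t · (2^{−2c} · G(σ, θ_t))^{L_a}, the finite-blocklength BLER upper bound P_e^{UB}(σ) = 1 − ∏_{a=1}^{n/k} (1 − min{1, (2^k − 1)·2^{n − ak} · F(L_a, σ)}) satisfies lim_{σ → 0⁺} P_e^{UB}(σ) = P_EF, where P_EF = 1 − ∏_{a=1}^{n/k} (1 − min{1, (2^k − 1)·2^{n − ak − L_a·c − 1}}). -/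

import Mathlib

open MeasureTheory Real Filter

private lemma exp_aux_spinal {x s : ℝ} (hx : 0 < x) (hs : 0 < s) :
    Tendsto (fun σ : ℝ => Real.exp (-x / (4 * σ^2 * s^2)))
      (nhdsWithin 0 (Set.Ioi 0)) (nhds 0) := by
  have h1 : Tendsto (fun σ : ℝ => 4 * σ^2 * s^2) (nhdsWithin 0 (Set.Ioi 0))
      (nhdsWithin 0 (Set.Ioi 0)) := by
    apply tendsto_nhdsWithin_of_tendsto_nhds_of_eventually_within
    · have hcont : Continuous fun σ : ℝ => 4 * σ^2 * s^2 := by continuity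
      have := hcont.tendsto 0
      simp only [ne_eq, OfNat.ofNat_ne_zero, not_false_eq_true, zero_pow, mul_zero, zero_mul] at this
      exact this.mono_left nhdsWithin_le_nhds
    · filter_upwards [self_mem_nhdsWithin] with σ hσ
      have : (0:ℝ) < σ := hσ
      exact Set.mem_Ioi.mpr (by positivity)
  have h2 : Tendsto (fun σ : ℝ => x / (4 * σ^2 * s^2)) (nhdsWithin 0 (Set.Ioi 0)) atTop := by
    have h3 := tendsto_inv_nhdsGT_zero.comp h1
    have h4 := Tendsto.const_mul_atTop hx h3
    simpa [div_eq_mul_inv, Function.comp] using h4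
  have h5 : Tendsto (fun σ : ℝ => -x / (4 * σ^2 * s^2)) (nhdsWithin 0 (Set.Ioi 0)) atBot := by
    have := tendsto_neg_atTop_atBot.comp h2
    exact this.congr (fun σ => by simp [Function.comp, neg_div])
  exact Real.tendsto_exp_atBot.comp h5

/-- For `(n, k, c, Ψ, L)` Spinal codes (with `k ∣ n`,
`|Ψ| = 2^c`, `H` almost surely nonzero, pass counts
`L_a = L·(n/k − a + 1)`, quadrature angles `0 = θ₀ < ⋯ < θ_N = π/2`,
weights `b_t = (θ_t − θ_{t−1})/π`,
`G(σ, θ) = Σ_{βᵢ, βⱼ ∈ Ψ} E[exp(−|H·(βᵢ − βⱼ)|²/(4σ² sin²θ))]` and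
`F(L', σ) = Σ_{t=1}^N b_t (2^{−2c} G(σ, θ_t))^{L'}`), the finite-blocklength
BLER upper bound
`P_e^{UB}(σ) = 1 − ∏_{a=1}^{n/k} (1 − min{1, (2^k − 1)·2^{n−ak}·F(L_a, σ)})`
satisfies `lim_{σ → 0⁺} P_e^{UB}(σ) = P_EF`, where
`P_EF = 1 − ∏_{a=1}^{n/k} (1 − min{1, (2^k − 1)·2^{n−ak−L_a·c−1}})`. -/
theorem spinal_BLER_bound_tendsto_error_floor
    {Ω : Type*} [MeasurableSpace Ω] (μ : Measure Ω) [IsProbabilityMeasure μ]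
    (H : Ω → ℂ) (hH : Measurable H) (hH0 : μ {ω | H ω = 0} = 0)
    (n k c L : ℕ) (hn : 0 < n) (hk : 0 < k) (hc : 0 < c) (hL : 0 < L)
    (hkn : k ∣ n)
    (Ψ : Finset ℂ) (hΨ : Ψ.card = 2 ^ c)
    (N : ℕ) (hN : 0 < N)
    (θ : ℕ → ℝ) (hθ0 : θ 0 = 0) (hθN : θ N = Real.pi / 2)
    (hθmono : ∀ t, t < N → θ t < θ (t + 1))
    (G : ℝ → ℝ → ℝ)
    (hG : ∀ σ ϑ, G σ ϑ = ∑ βi ∈ Ψ, ∑ βj ∈ Ψ,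
      ∫ ω, Real.exp (-‖H ω * (βi - βj)‖^2 /
        (4 * σ^2 * (Real.sin ϑ)^2)) ∂μ)
    (F : ℕ → ℝ → ℝ)
    (hF : ∀ L' σ, F L' σ = ∑ t ∈ Finset.Icc 1 N,
      ((θ t - θ (t - 1)) / Real.pi) * ((2 : ℝ) ^ (-(2 * (c : ℤ))) * G σ (θ t)) ^ L')
    (La : ℕ → ℕ) (hLa : ∀ a, La a = L * (n / k - a + 1))
    (Pub : ℝ → ℝ)
    (hPub : ∀ σ, Pub σ = 1 - ∏ a ∈ Finset.Icc 1 (n / k),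
      (1 - min 1 (((2 : ℝ) ^ k - 1) * (2 : ℝ) ^ (n - a * k) * F (La a) σ)))
    (PEF : ℝ)
    (hPEF : PEF = 1 - ∏ a ∈ Finset.Icc 1 (n / k),
      (1 - min 1 (((2 : ℝ) ^ k - 1) *
        (2 : ℝ) ^ ((n : ℤ) - (a : ℤ) * (k : ℤ) - (La a : ℤ) * (c : ℤ) - 1)))) :
    Filter.Tendsto Pub (nhdsWithin 0 (Set.Ioi 0)) (nhds PEF) := by
  have hpi : (0:ℝ) < Real.pi := Real.pi_pos
  -- monotonicity of θ
  have hle : ∀ i j : ℕ, j ≤ N → i ≤ j → θ i ≤ θ j := by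
    intro i j hjN hij
    induction j with
    | zero => obtain rfl := Nat.le_zero.mp hij; exact le_refl _
    | succ m ih =>
      rcases eq_or_lt_of_le hij with rfl | h
      · exact le_refl _
      · have h1 : i ≤ m := Nat.lt_succ_iff.mp h
        exact (ih (le_trans (Nat.le_succ m) hjN) h1).trans (hθmono m (by omega)).le
  -- a.e. nonzero H
  have hae : ∀ᵐ ω ∂μ, H ω ≠ 0 := by
    rw [ae_iff]
    simpa using hH0
  -- G tendsto 2^c
  have hGt : ∀ t ∈ Finset.Icc 1 N,
      Tendsto (fun σ => G σ (θ t)) (nhdsWithin 0 (Set.Ioi 0)) (nhds ((2:ℝ)^c)) := by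
    intro t ht
    simp only [Finset.mem_Icc] at ht
    have hsin : 0 < Real.sin (θ t) := by
      apply Real.sin_pos_of_pos_of_lt_pi
      · calc (0:ℝ) = θ 0 := hθ0.symm
          _ < θ 1 := hθmono 0 hN
          _ ≤ θ t := hle 1 t ht.2 ht.1
      · calc θ t ≤ θ N := hle t N le_rfl ht.2
          _ = Real.pi/2 := hθN
          _ < Real.pi := by linarith
    have hcard : ((2:ℝ)^c) = ∑ βi ∈ Ψ, ∑ βj ∈ Ψ, (if βi = βj then (1:ℝ) else 0) := by
      have : ∀ βi ∈ Ψ, (∑ βj ∈ Ψ, (if βi = βj then (1:ℝ) else 0)) = 1 := by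
        intro βi hβi
        simp [Finset.sum_ite_eq, hβi]
      rw [Finset.sum_congr rfl this]
      simp [hΨ]
    rw [hcard]
    rw [show (fun σ => G σ (θ t)) = fun σ => ∑ βi ∈ Ψ, ∑ βj ∈ Ψ,
      ∫ ω, Real.exp (-‖H ω * (βi - βj)‖^2 /
        (4 * σ^2 * (Real.sin (θ t))^2)) ∂μ from funext fun σ => hG σ (θ t)]
    apply tendsto_finset_sum
    intro βi _
    apply tendsto_finset_sum
    intro βj _
    by_cases hij : βi = βj
    · subst hij
      simp only [if_true]
      have : ∀ σ : ℝ, (∫ ω, Real.exp (-‖H ω * (βi - βi)‖^2 /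
          (4 * σ^2 * (Real.sin (θ t))^2)) ∂μ) = 1 := by
        intro σ
        simp [sub_self, measure_univ]
      simp only [this]
      exact
        (tendsto_const_nhds :
        Tendsto (fun _ : ℝ => (1:ℝ)) (nhdsWithin 0 (Set.Ioi 0)) (nhds 1))
    · simp only [hij, if_false]
      have hd : βi - βj ≠ 0 := sub_ne_zero.mpr hij
      have key := MeasureTheory.tendsto_integral_filter_of_dominated_convergence
        (μ := μ) (l := nhdsWithin (0:ℝ) (Set.Ioi 0))
        (F := fun σ ω => Real.exp (-‖H ω * (βi - βj)‖^2 /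
          (4 * σ^2 * (Real.sin (θ t))^2)))
        (f := fun _ => (0:ℝ)) (bound := fun _ => (1:ℝ))
        (by
          filter_upwards with σ
          apply Measurable.aestronglyMeasurable
          exact (Real.continuous_exp.measurable).comp
            ((((continuous_norm.measurable.comp (hH.mul_const _)).pow_const 2).neg).div_const _))
        (by
          filter_upwards with σ
          filter_upwards with ω
          rw [Real.norm_eq_abs, abs_of_pos (Real.exp_pos _)]
          rw [show (1:ℝ) = Real.exp 0 by simp]
          apply Real.exp_le_exp.mpr
          apply div_nonpos_of_nonpos_of_nonneg
          · simp [sq_nonneg]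
          · positivity)
        (integrable_const 1)
        (by
          filter_upwards [hae] with ω hω
          have hx : 0 < ‖H ω * (βi - βj)‖^2 := by
            have h0 : H ω * (βi - βj) ≠ 0 := mul_ne_zero hω hd
            have := norm_pos_iff.mpr h0
            positivity
          exact exp_aux_spinal hx hsin)
      simpa using key
  -- F tendsto
  have hFt : ∀ a : ℕ, Tendsto (fun σ => F (La a) σ) (nhdsWithin 0 (Set.Ioi 0))
      (nhds ((1/2) * (2:ℝ)^(-((c : ℤ) * (La a : ℤ))))) := by
    intro a
    have htel : ∑ t ∈ Finset.Icc 1 N, (θ t - θ (t-1)) = Real.pi/2 := by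
      have h1 : ∑ t ∈ Finset.Icc 1 N, (θ t - θ (t-1))
          = ∑ i ∈ Finset.range N, (θ (i+1) - θ i) := by
        rw [show Finset.Icc 1 N = Finset.Ico 1 (N+1) by rw [Finset.Ico_add_one_right_eq_Icc],
          Finset.sum_Ico_eq_sum_range]
        apply Finset.sum_congr (by norm_num)
        intro i _
        congr 1 <;> congr 1 <;> omega
      rw [h1, Finset.sum_range_sub, hθN, hθ0]
      ring
    have hval : ((1:ℝ)/2) * (2:ℝ)^(-((c : ℤ) * (La a : ℤ)))
        = ∑ t ∈ Finset.Icc 1 N, ((θ t - θ (t-1))/Real.pi) * ((2:ℝ)^(-(2*(c:ℤ))) * (2:ℝ)^c) ^ (La a) := by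
      rw [← Finset.sum_mul, ← Finset.sum_div, htel]
      have he : ((2:ℝ)^(-(2*(c:ℤ))) * (2:ℝ)^c) ^ (La a) = (2:ℝ)^(-((c : ℤ) * (La a : ℤ))) := by
        rw [show ((2:ℝ):ℝ)^c = (2:ℝ)^((c:ℤ)) from (zpow_natCast 2 c).symm,
          ← zpow_add₀ (two_ne_zero), ← zpow_natCast ((2:ℝ)^(-(2*(c:ℤ)) + (c:ℤ))) (La a),
          ← zpow_mul]
        congr 1
        ring
      rw [he]
      congr 1
      field_simp
    rw [show (fun σ => F (La a) σ) = fun σ => ∑ t ∈ Finset.Icc 1 N,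
      ((θ t - θ (t-1))/Real.pi) * ((2:ℝ)^(-(2*(c:ℤ))) * G σ (θ t)) ^ (La a)
      from funext (fun σ => hF (La a) σ), hval]
    apply tendsto_finset_sum
    intro t ht
    exact Tendsto.const_mul _ ((Tendsto.const_mul _ (hGt t ht)).pow (La a))
  -- assemble
  have hfinal : Tendsto (fun σ => 1 - ∏ a ∈ Finset.Icc 1 (n / k),
      (1 - min 1 (((2 : ℝ) ^ k - 1) * (2 : ℝ) ^ (n - a * k) * F (La a) σ)))
      (nhdsWithin 0 (Set.Ioi 0)) (nhds PEF) := by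
    rw [hPEF]
    apply Tendsto.const_sub
    apply tendsto_finset_prod
    intro a ha
    apply Tendsto.const_sub
    have hak : a * k ≤ n := by
      simp only [Finset.mem_Icc] at ha
      calc a * k ≤ (n/k) * k := Nat.mul_le_mul_right k ha.2
        _ = n := Nat.div_mul_cancel hkn
    have heq : ((2 : ℝ) ^ k - 1) * (2 : ℝ) ^ (n - a * k) * ((1/2) * (2:ℝ)^(-((c : ℤ) * (La a : ℤ))))
        = ((2 : ℝ) ^ k - 1) * (2 : ℝ) ^ ((n : ℤ) - (a : ℤ) * (k : ℤ) - (La a : ℤ) * (c : ℤ) - 1) := by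
      rw [mul_assoc]
      congr 1
      rw [show ((2:ℝ):ℝ)^(n - a*k) = (2:ℝ)^(((n - a*k : ℕ) : ℤ)) from (zpow_natCast 2 _).symm,
        show ((n - a*k : ℕ) : ℤ) = (n:ℤ) - (a:ℤ)*(k:ℤ) by push_cast [hak]; ring,
        show ((1:ℝ)/2) = (2:ℝ)^(-1:ℤ) by norm_num,
        ← zpow_add₀ (two_ne_zero : (2:ℝ) ≠ 0), ← zpow_add₀ (two_ne_zero : (2:ℝ) ≠ 0)]
      congr 1
      ring
    rw [← heq]
    exact Tendsto.min tendsto_const_nhds (Tendsto.const_mul _ (hFt a))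
  exact hfinal.congr (fun σ => (hPub σ).symm)
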